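/- Let p be a prime and A an abelian group such that A[p] is finite and multiplication by n is surjective on A for every integer n ≥ 1 coprime to p. Let D = ⋂_{n≥1} pⁿA. Then the torsion subgroup of the quotient A/D is finite. (Abstract form of Lemma 3.21, part (ii).) -/

import Mathlib

/-- The subgroup `p^∞A = ⋂_{n≥1} pⁿA` of an abelian group `A`. -/
def pinfSubgroup (p : ℕ) (A : Type*) [AddCommGroup A] : AddSubgroup A where
  carrier := {a | ∀ n : ℕ, 1 ≤ n → ∃ x : A, p ^ n • x = a}
  zero_mem' := fun _ _ => ⟨0, smul_zero _⟩
  add_mem' := by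
    intro a b ha hb n hn
    obtain ⟨x, hx⟩ := ha n hn
    obtain ⟨y, hy⟩ := hb n hn
    exact ⟨x + y, by rw [smul_add, hx, hy]⟩
  neg_mem' := by
    intro a ha n hn
    obtain ⟨x, hx⟩ := ha n hn
    exact ⟨-x, by rw [smul_neg, hx]⟩

section Aux

variable {A : Type*} [AddCommGroup A] (p : ℕ)

lemma mem_pinf {a : A} : a ∈ pinfSubgroup p A ↔ ∀ n : ℕ, 1 ≤ n → ∃ x : A, p ^ n • x = a :=
  Iff.rfl

lemma mem_pinf' {a : A} : a ∈ pinfSubgroup p A ↔ ∀ n : ℕ, ∃ x : A, p ^ n • x = a := by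
  rw [mem_pinf]
  constructor
  · intro h n
    rcases n with _ | n
    · exact ⟨a, by simp⟩
    · exact h (n + 1) (Nat.succ_le_succ (Nat.zero_le n))
  · exact fun h n _ => h n

lemma pow_smul_mono {m n : ℕ} (h : m ≤ n) (x : A) : ∃ y : A, p ^ m • y = p ^ n • x :=
  ⟨p ^ (n - m) • x, by rw [smul_smul, ← pow_add, Nat.add_sub_cancel' h]⟩

/-- Pigeonhole: if for every `n` there is `t` in a fixed finite set `S` with
`a - t ∈ pⁿA`, then some single `t ∈ S` works for all `n`. -/
lemma pigeon {S : Set A} (hS : S.Finite) (a : A)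
    (h : ∀ n : ℕ, ∃ t ∈ S, ∃ x : A, p ^ n • x = a - t) :
    ∃ t ∈ S, a - t ∈ pinfSubgroup p A := by
  classical
  choose f hf x hx using h
  haveI : Finite ↥S := hS.to_subtype
  obtain ⟨t, ht⟩ := Finite.exists_infinite_fiber (fun n : ℕ => (⟨f n, hf n⟩ : ↥S))
  have hinf : ((fun n : ℕ => (⟨f n, hf n⟩ : ↥S)) ⁻¹' {t}).Infinite :=
    Set.infinite_coe_iff.mp ht
  refine ⟨t, t.2, (mem_pinf' p).mpr fun m => ?_⟩
  obtain ⟨n, hn, hmn⟩ := hinf.exists_gt m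
  have hfn : f n = (t : A) := congrArg Subtype.val hn
  obtain ⟨y, hy⟩ := pow_smul_mono p (le_of_lt hmn) (x n)
  exact ⟨y, by rw [hy, hx n, hfn]⟩

/-- `A[p^k]` is finite if `A[p]` is. -/
lemma tor_finite (hfin : {x : A | p • x = 0}.Finite) :
    ∀ k : ℕ, {x : A | p ^ k • x = 0}.Finite := by
  intro k
  induction k with
  | zero =>
      have : {x : A | p ^ 0 • x = 0} ⊆ {(0 : A)} := by
        intro x hx
        simpa using hx
      exact (Set.finite_singleton 0).subset this
  | succ k ih =>
      have hfiber : ∀ t : A, {x : A | p • x = t}.Finite := by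
        intro t
        rcases Set.eq_empty_or_nonempty {x : A | p • x = t} with h | ⟨x₀, hx₀⟩
        · simp [h]
        · have hsub : {x : A | p • x = t} ⊆ (fun z => z + x₀) '' {x : A | p • x = 0} := by
            intro x hx
            refine ⟨x - x₀, ?_, by simp⟩
            have hx' : p • x = p • x₀ := by rw [hx, hx₀]
            simp [smul_sub, hx']
          exact ((hfin.image _).subset hsub)
      have hsub : {x : A | p ^ (k + 1) • x = 0} ⊆
          ⋃ t ∈ {x : A | p ^ k • x = 0}, {x : A | p • x = t} := by
        intro x hx
        have hmem : p ^ k • (p • x) = 0 := by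
          rw [smul_smul, ← pow_succ]
          exact hx
        exact Set.mem_biUnion hmem rfl
      exact (ih.biUnion fun t _ => hfiber t).subset hsub

/-- If `m` is coprime to `p` and `m • a ∈ D`, then `a ∈ D`. -/
lemma coprime_div {m : ℕ} (hm : Nat.Coprime m p) (a : A)
    (h : m • a ∈ pinfSubgroup p A) : a ∈ pinfSubgroup p A := by
  rw [mem_pinf'] at h ⊢
  intro j
  obtain ⟨x, hx⟩ := h j
  have hcop : IsCoprime (m : ℤ) ((p : ℤ) ^ j) := by
    have h0 := Nat.isCoprime_iff_coprime.mpr (hm.pow_right j)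
    push_cast at h0
    exact h0
  obtain ⟨u, v, huv⟩ := hcop
  refine ⟨u • x + v • a, ?_⟩
  have hpj : ∀ z : A, p ^ j • z = ((p : ℤ) ^ j) • z := by
    intro z
    have h1 : ((p ^ j : ℕ) : ℤ) • z = p ^ j • z := natCast_zsmul z (p ^ j)
    push_cast at h1
    exact h1.symm
  have hx' : ((p : ℤ) ^ j) • x = (m : ℤ) • a := by
    rw [← hpj, hx, ← natCast_zsmul a m]
  rw [hpj, smul_add, smul_smul, mul_comm _ u, ← smul_smul, hx', smul_smul, smul_smul,
    mul_comm _ v, ← add_smul, huv, one_smul]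

/-- `D` is `p`-divisible. -/
lemma pdiv1 (hfin : {x : A | p • x = 0}.Finite) {d : A} (hd : d ∈ pinfSubgroup p A) :
    ∃ e ∈ pinfSubgroup p A, p • e = d := by
  have hd' := (mem_pinf' p).mp hd
  obtain ⟨x₁, hx₁⟩ := hd' 1
  rw [pow_one] at hx₁
  have hSfin : {y : A | p • y = d}.Finite := by
    have hsub : {y : A | p • y = d} ⊆ (fun z => z + x₁) '' {x : A | p • x = 0} := by
      intro y hy
      refine ⟨y - x₁, ?_, by simp⟩
      have hy' : p • y = p • x₁ := by rw [hy, hx₁]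
      simp [smul_sub, hy']
    exact (hfin.image _).subset hsub
  have h : ∀ n : ℕ, ∃ t ∈ {y : A | p • y = d}, ∃ x : A, p ^ n • x = 0 - t := by
    intro n
    obtain ⟨x, hx⟩ := hd' (n + 1)
    refine ⟨p ^ n • x, ?_, -x, ?_⟩
    · show p • p ^ n • x = d
      rw [smul_smul, ← pow_succ']
      exact hx
    · rw [smul_neg, zero_sub]
  obtain ⟨t, htS, htD⟩ := pigeon p hSfin 0 h
  rw [zero_sub] at htD
  have : t ∈ pinfSubgroup p A := by
    have := (pinfSubgroup p A).neg_mem htD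
    rwa [neg_neg] at this
  exact ⟨t, this, htS⟩

lemma pdiv (hfin : {x : A | p • x = 0}.Finite) {d : A} (hd : d ∈ pinfSubgroup p A) (k : ℕ) :
    ∃ e ∈ pinfSubgroup p A, p ^ k • e = d := by
  induction k with
  | zero => exact ⟨d, hd, by simp⟩
  | succ k ih =>
      obtain ⟨e, heD, he⟩ := ih
      obtain ⟨e', heD', he'⟩ := pdiv1 p hfin heD
      exact ⟨e', heD', by rw [pow_succ, mul_smul, he', he]⟩

/-- Torsion lifting: if `p^k • a ∈ D` then `a` differs from a `p^k`-torsion element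
by an element of `D`. -/
lemma lift_tor (hfin : {x : A | p • x = 0}.Finite) (k : ℕ) (a : A)
    (h : p ^ k • a ∈ pinfSubgroup p A) :
    ∃ t : A, p ^ k • t = 0 ∧ a - t ∈ pinfSubgroup p A := by
  have h' := (mem_pinf' p).mp h
  have hh : ∀ n : ℕ, ∃ t ∈ {t : A | p ^ k • t = 0}, ∃ x : A, p ^ n • x = a - t := by
    intro n
    obtain ⟨b, hb⟩ := h' (k + n)
    refine ⟨a - p ^ n • b, ?_, b, by abel⟩
    show p ^ k • (a - p ^ n • b) = 0
    rw [smul_sub, smul_smul, ← pow_add, hb, sub_self]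
  obtain ⟨t, htS, htD⟩ := pigeon p (tor_finite p hfin k) a hh
  exact ⟨t, htS, htD⟩

/-- Stabilization: there is `N` with `A[p] ∩ p^N A ⊆ D`. -/
lemma stab (hfin : {x : A | p • x = 0}.Finite) :
    ∃ N : ℕ, ∀ x : A, p • x = 0 → (∃ y : A, p ^ N • y = x) → x ∈ pinfSubgroup p A := by
  classical
  have hT : {x : A | p • x = 0 ∧ x ∉ pinfSubgroup p A}.Finite :=
    hfin.subset fun x hx => hx.1
  have hex : ∀ x ∈ {x : A | p • x = 0 ∧ x ∉ pinfSubgroup p A},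
      ∃ n : ℕ, ∀ y : A, p ^ n • y ≠ x := by
    intro x hx
    by_contra hcon
    push_neg at hcon
    exact hx.2 ((mem_pinf' p).mpr hcon)
  choose! nfun hn using hex
  refine ⟨hT.toFinset.sup nfun, fun x hx1 hx2 => ?_⟩
  by_contra hxD
  have hxT : x ∈ {x : A | p • x = 0 ∧ x ∉ pinfSubgroup p A} := ⟨hx1, hxD⟩
  obtain ⟨y, hy⟩ := hx2
  have hle : nfun x ≤ hT.toFinset.sup nfun :=
    Finset.le_sup (hT.mem_toFinset.mpr hxT)
  obtain ⟨z, hz⟩ := pow_smul_mono p hle y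
  exact hn x hxT z (by rw [hz, hy])

end Aux

section Quot

variable {A : Type*} [AddCommGroup A] (p : ℕ)

local notation "D" => pinfSubgroup p A

lemma mk_nsmul (n : ℕ) (a : A) :
    (QuotientAddGroup.mk (n • a) : A ⧸ D) = n • (QuotientAddGroup.mk a : A ⧸ D) :=
  map_nsmul (QuotientAddGroup.mk' (D)) n a

lemma coprime_quot {m : ℕ} (hm : Nat.Coprime m p) {y : A ⧸ D} (h : m • y = 0) :
    y = 0 := by
  obtain ⟨a, rfl⟩ := QuotientAddGroup.mk_surjective y
  rw [← mk_nsmul, QuotientAddGroup.eq_zero_iff] at h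
  rw [QuotientAddGroup.eq_zero_iff]
  exact coprime_div p hm a h

lemma descent (hfin : {x : A | p • x = 0}.Finite) (N : ℕ)
    (hN : ∀ x : A, p • x = 0 → (∃ y : A, p ^ N • y = x) → x ∈ D) :
    ∀ k : ℕ, ∀ y : A ⧸ D, p ^ k • y = 0 →
      ∃ t : A, p ^ N • t = 0 ∧ (QuotientAddGroup.mk t : A ⧸ D) = y := by
  intro k
  induction k with
  | zero =>
      intro y hy
      simp only [pow_zero, one_smul] at hy
      exact ⟨0, smul_zero _, by rw [hy]; rfl⟩
  | succ k ih =>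
      intro y hy
      rcases le_or_gt (k + 1) N with hle | hlt
      · -- direct case: p^N • y = 0 too
        obtain ⟨a, rfl⟩ := QuotientAddGroup.mk_surjective y
        have hyN : p ^ N • a ∈ D := by
          rw [← mk_nsmul, QuotientAddGroup.eq_zero_iff] at hy
          have heq : p ^ N • a = p ^ (N - (k + 1)) • (p ^ (k + 1) • a) := by
            rw [smul_smul, ← pow_add, Nat.sub_add_cancel hle]
          rw [heq]
          exact AddSubgroup.nsmul_mem _ hy _
        obtain ⟨t, ht0, htD⟩ := lift_tor p hfin N a hyN
        refine ⟨t, ht0, ?_⟩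
        rw [QuotientAddGroup.eq]
        have : -t + a = (a - t) := by abel
        rw [this]
        exact htD
      · -- k ≥ N : reduce to k
        have hNk : N ≤ k := Nat.lt_succ_iff.mp hlt
        obtain ⟨a, rfl⟩ := QuotientAddGroup.mk_surjective y
        have haD : p ^ (k + 1) • a ∈ D := by
          rwa [← mk_nsmul, QuotientAddGroup.eq_zero_iff] at hy
        obtain ⟨t, ht0, htD⟩ := lift_tor p hfin (k + 1) a haD
        -- p^k • t ∈ A[p] ∩ p^N A ⊆ D
        have h1 : p • (p ^ k • t) = 0 := by
          rw [smul_smul, ← pow_succ']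
          exact ht0
        have h2 : ∃ z : A, p ^ N • z = p ^ k • t := pow_smul_mono p hNk t
        have h3 : p ^ k • t ∈ D := hN _ h1 h2
        obtain ⟨d, hdD, hd⟩ := pdiv p hfin h3 k
        have ht'0 : p ^ k • (t - d) = 0 := by rw [smul_sub, hd, sub_self]
        have hmk : (QuotientAddGroup.mk (t - d) : A ⧸ D) = QuotientAddGroup.mk a := by
          rw [QuotientAddGroup.eq]
          have : -(t - d) + a = (a - t) + d := by abel
          rw [this]
          exact (D).add_mem htD hdD
        have hyk : p ^ k • (QuotientAddGroup.mk a : A ⧸ D) = 0 := by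
          rw [← hmk, ← mk_nsmul, ht'0]
          rfl
        obtain ⟨s, hs0, hs⟩ := ih _ hyk
        exact ⟨s, hs0, hs⟩

end Quot

/-- Let `p` be a prime and `A` an abelian group with `A[p]` finite, on which multiplication
by every `n ≥ 1` coprime to `p` is surjective. Then the torsion subgroup of the quotient
`A / p^∞A` is finite. -/
theorem stmt_12 {A : Type*} [AddCommGroup A] (p : ℕ) (hp : p.Prime)
    (hfin : {x : A | p • x = 0}.Finite)
    (hdiv : ∀ n : ℕ, 1 ≤ n → Nat.Coprime n p → Function.Surjective (fun x : A => n • x)) :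
    {y : A ⧸ pinfSubgroup p A | ∃ n : ℕ, 1 ≤ n ∧ n • y = 0}.Finite := by
  classical
  obtain ⟨N, hN⟩ := stab p hfin
  have hsub : {y : A ⧸ pinfSubgroup p A | ∃ n : ℕ, 1 ≤ n ∧ n • y = 0} ⊆
      (fun t : A => (QuotientAddGroup.mk t : A ⧸ pinfSubgroup p A)) ''
        {t : A | p ^ N • t = 0} := by
    rintro y ⟨n, hn1, hny⟩
    have hn0 : n ≠ 0 := Nat.one_le_iff_ne_zero.mp hn1
    set k := n.factorization p with hk
    set m := n / p ^ k with hm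
    have hnm : p ^ k * m = n := Nat.ordProj_mul_ordCompl_eq_self n p
    have hmcop : Nat.Coprime m p := (Nat.coprime_ordCompl hp hn0).symm
    -- m • (p^k • y) = 0
    have h1 : m • (p ^ k • y) = 0 := by
      rw [smul_smul, mul_comm, hnm]
      exact hny
    have h2 : p ^ k • y = 0 := coprime_quot p hmcop h1
    obtain ⟨t, ht0, hty⟩ := descent p hfin N hN k y h2
    exact ⟨t, ht0, hty⟩
  exact ((tor_finite p hfin N).image _).subset hsub
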